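/- For every k ≥ 6 there exists a stringent graph on k vertices: a graph H such that (1) H has no homogeneous vertex subset W with 1 < |W| ≤ |V(H)|−1, where W is homogeneous if all vertices of W have the same neighborhood outside W, and (2) H has no non-trivial automorphism. -/

import Mathlib

open SimpleGraph

/-- A set `W` of vertices is homogeneous in `H` if all vertices of `W` have the same
neighborhood outside `W`. -/
def IsHomogSet {V : Type*} (H : SimpleGraph V) (W : Set V) : Prop :=
  ∀ u ∈ W, ∀ v ∈ W, ∀ x ∉ W, (H.Adj u x ↔ H.Adj v x)

/-- A graph is stringent if it has no homogeneous set `W` with `1 < |W| ≤ |V|−1`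
and no non-trivial automorphism. -/
def Stringent {V : Type*} [Fintype V] (H : SimpleGraph V) : Prop :=
  (∀ W : Set V, 1 < W.ncard → W.ncard ≤ Fintype.card V - 1 → ¬ IsHomogSet H W) ∧
  (∀ φ : H ≃g H, ∀ v, φ v = v)

/-- The path `0 - 1 - ⋯ - (k-1)` together with the chord `{1,3}`. -/
def Gr (k : ℕ) : SimpleGraph (Fin k) where
  Adj i j := i.val+1=j.val ∨ j.val+1=i.val ∨ (i.val=1 ∧ j.val=3) ∨ (i.val=3 ∧ j.val=1)
  symm := ⟨by intro i j h; omega⟩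
  loopless := ⟨by intro i h; omega⟩

lemma adjGr {k : ℕ} (i j : Fin k) : (Gr k).Adj i j ↔
    (i.val+1=j.val ∨ j.val+1=i.val ∨ (i.val=1 ∧ j.val=3) ∨ (i.val=3 ∧ j.val=1)) := Iff.rfl

lemma adjGr' {k a b : ℕ} (ha : a < k) (hb : b < k) :
    (Gr k).Adj ⟨a,ha⟩ ⟨b,hb⟩ ↔ (a+1=b ∨ b+1=a ∨ (a=1∧b=3) ∨ (a=3∧b=1)) := Iff.rfl

lemma adjGrL {k a : ℕ} (ha : a < k) (x : Fin k) :
    (Gr k).Adj ⟨a,ha⟩ x ↔ (a+1=x.val ∨ x.val+1=a ∨ (a=1∧x.val=3) ∨ (a=3∧x.val=1)) := Iff.rfl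

lemma adjGrR {k a : ℕ} (ha : a < k) (x : Fin k) :
    (Gr k).Adj x ⟨a,ha⟩ ↔ (x.val+1=a ∨ a+1=x.val ∨ (x.val=1∧a=3) ∨ (x.val=3∧a=1)) := Iff.rfl

-- crossing boundary lemma
lemma boundary {k : ℕ} (W : Set (Fin k)) (u : Fin k) (hu : u ∈ W) (x : Fin k) (hx : x ∉ W) :
    ∃ n, ∃ h : n + 1 < k, ¬(((⟨n, by omega⟩ : Fin k) ∈ W) ↔ ((⟨n+1, h⟩ : Fin k) ∈ W)) := by
  by_contra hc
  push_neg at hc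
  have key : ∀ n (h : n < k), ((⟨n, h⟩ : Fin k) ∈ W ↔ (⟨0, Nat.lt_of_lt_of_le (Nat.zero_lt_succ _) h⟩ : Fin k) ∈ W) := by
    intro n
    induction n with
    | zero => intro h; exact Iff.rfl
    | succ m ih =>
      intro h
      have h1 := hc m h
      have h2 := ih (by omega)
      exact Iff.trans (Iff.symm h1) h2
  have h1 := key u.val u.isLt
  have h2 := key x.val x.isLt
  rw [Fin.eta] at h1 h2
  exact hx (h2.mpr (h1.mp hu))

set_option linter.all false in
set_option maxHeartbeats 2000000 in
lemma no_homog {k : ℕ} (hk : 6 ≤ k) (W : Set (Fin k)) (hc1 : 1 < W.ncard)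
    (hc2 : W.ncard ≤ Fintype.card (Fin k) - 1) : ¬ IsHomogSet (Gr k) W := by
  intro hW
  -- two distinct elements
  obtain ⟨u, v, hu, hv, huv⟩ := (Set.one_lt_ncard_iff (Set.toFinite W)).mp hc1
  -- an element outside
  have hWne : W ≠ Set.univ := by
    intro h
    rw [h, Set.ncard_univ, Fintype.card_fin] at hc2
    simp [Fintype.card_fin] at hc2
    omega
  obtain ⟨x0, hx0⟩ : ∃ x0, x0 ∉ W := by
    by_contra hcon
    push_neg at hcon
    exact hWne (Set.eq_univ_of_forall hcon)
  -- crossing edge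
  obtain ⟨n, hn, hcross⟩ := boundary W u hu x0 hx0
  have hadjnn : (Gr k).Adj (⟨n, by omega⟩ : Fin k) (⟨n+1, hn⟩ : Fin k) := by
    rw [adjGr']; omega
  -- get w ∈ W, x ∉ W, Adj w x
  obtain ⟨w, x, hw, hx, hwx⟩ :
      ∃ w x : Fin k, w ∈ W ∧ x ∉ W ∧ (Gr k).Adj w x := by
    by_cases h : (⟨n, by omega⟩ : Fin k) ∈ W
    · have h2 : (⟨n+1, hn⟩ : Fin k) ∉ W := fun hh => hcross ⟨fun _ => hh, fun _ => h⟩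
      exact ⟨_, _, h, h2, hadjnn⟩
    · have h2 : (⟨n+1, hn⟩ : Fin k) ∈ W := by
        by_contra hh
        exact hcross ⟨fun hhh => absurd hhh h, fun hhh => absurd hhh hh⟩
      exact ⟨_, _, h2, h, (Gr k).adj_symm hadjnn⟩
  -- every element of W is adjacent to x
  have hadj : ∀ z ∈ W, (Gr k).Adj z x := fun z hz => (hW z hz w hw x hx).mpr hwx
  have hnot : ∀ (m : ℕ) (hm : m < k), ¬ (Gr k).Adj (⟨m, hm⟩ : Fin k) x →
      (⟨m, hm⟩ : Fin k) ∉ W := fun m hm hd hdW => hd (hadj _ hdW)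
  -- val facts
  have hxk := x.isLt
  have huk := u.isLt
  have hvk := v.isLt
  have ha : u.val+1=x.val ∨ x.val+1=u.val ∨ (u.val=1∧x.val=3) ∨ (u.val=3∧x.val=1) :=
    (adjGr u x).mp (hadj u hu)
  have hb : v.val+1=x.val ∨ x.val+1=v.val ∨ (v.val=1∧x.val=3) ∨ (v.val=3∧x.val=1) :=
    (adjGr v x).mp (hadj v hv)
  have hab : u.val ≠ v.val := fun h => huv (Fin.ext h)
  -- helper: vertex not in W constrains vals of W elements
  have hval : ∀ (m : ℕ) (hm : m < k), (⟨m, hm⟩ : Fin k) ∉ W → ∀ z ∈ W, z.val ≠ m := by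
    intro m hm hmW z hz h
    have he : (⟨m, hm⟩ : Fin k) = z := by
      apply Fin.ext
      exact h.symm
    exact hmW (he.symm ▸ hz)
  -- case analysis on x.val
  rcases (show x.val = 0 ∨ x.val = 1 ∨ x.val = 2 ∨ x.val = 3 ∨
      (4 ≤ x.val ∧ x.val ≤ k-2) ∨ x.val = k-1 by omega) with h0 | h1 | h2 | h3 | h4 | hk1
  · omega
  · -- x.val = 1
    by_cases h3W : (⟨3, by omega⟩ : Fin k) ∈ W
    · -- pick m ∈ W with m.val ≠ 3
      obtain ⟨m, hm, hm3⟩ : ∃ m, m ∈ W ∧ m.val ≠ 3 := by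
        by_cases hu3 : u.val = 3
        · exact ⟨v, hv, by omega⟩
        · exact ⟨u, hu, hu3⟩
      have hmadj : m.val+1=x.val ∨ x.val+1=m.val ∨ (m.val=1∧x.val=3) ∨ (m.val=3∧x.val=1) :=
        (adjGr m x).mp (hadj m hm)
      have hd : (⟨4, by omega⟩ : Fin k) ∉ W := by
        apply hnot; rw [adjGrL]; omega
      have hcon := hW _ h3W m hm _ hd
      rw [adjGr', adjGrR] at hcon
      have h5 := hcon.mp (Or.inl rfl)
      clear hcon hW hadj hnot hadjnn hwx hcross
      omega
    · have hu3 := hval 3 (by omega) h3W u hu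
      have hv3 := hval 3 (by omega) h3W v hv
      have hcon := hW u hu v hv _ h3W
      rw [adjGrR, adjGrR] at hcon
      have hsel : u.val = 2 ∨ v.val = 2 := by clear hcon hW hadj hnot hadjnn hwx hcross; omega
      rcases hsel with h | h
      · have h5 := hcon.mp (Or.inl (by omega))
        clear hcon hW hadj hnot hadjnn hwx hcross
        omega
      · have h5 := hcon.mpr (Or.inl (by omega))
        clear hcon hW hadj hnot hadjnn hwx hcross
        omega
  · -- x.val = 2
    have hd : (⟨0, by omega⟩ : Fin k) ∉ W := by
      apply hnot; rw [adjGrL]; omega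
    have hcon := hW u hu v hv _ hd
    rw [adjGrR, adjGrR] at hcon
    have hsel : u.val = 1 ∨ v.val = 1 := by clear hcon hW hadj hnot hadjnn hwx hcross; omega
    rcases hsel with h | h
    · have h5 := hcon.mp (Or.inr (Or.inl (by omega)))
      clear hcon hW hadj hnot hadjnn hwx hcross
      omega
    · have h5 := hcon.mpr (Or.inr (Or.inl (by omega)))
      clear hcon hW hadj hnot hadjnn hwx hcross
      omega
  · -- x.val = 3
    by_cases h1W : (⟨1, by omega⟩ : Fin k) ∈ W
    · obtain ⟨m, hm, hm1⟩ : ∃ m, m ∈ W ∧ m.val ≠ 1 := by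
        by_cases hu1 : u.val = 1
        · exact ⟨v, hv, by omega⟩
        · exact ⟨u, hu, hu1⟩
      have hmadj : m.val+1=x.val ∨ x.val+1=m.val ∨ (m.val=1∧x.val=3) ∨ (m.val=3∧x.val=1) :=
        (adjGr m x).mp (hadj m hm)
      have hd : (⟨0, by omega⟩ : Fin k) ∉ W := by
        apply hnot; rw [adjGrL]; omega
      have hcon := hW _ h1W m hm _ hd
      rw [adjGr', adjGrR] at hcon
      have h5 := hcon.mp (Or.inr (Or.inl rfl))
      clear hcon hW hadj hnot hadjnn hwx hcross
      omega
    · have hu1 := hval 1 (by omega) h1W u hu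
      have hv1 := hval 1 (by omega) h1W v hv
      have hcon := hW u hu v hv _ h1W
      rw [adjGrR, adjGrR] at hcon
      have hsel : u.val = 2 ∨ v.val = 2 := by clear hcon hW hadj hnot hadjnn hwx hcross; omega
      rcases hsel with h | h
      · have h5 := hcon.mp (Or.inr (Or.inl (by omega)))
        clear hcon hW hadj hnot hadjnn hwx hcross
        omega
      · have h5 := hcon.mpr (Or.inr (Or.inl (by omega)))
        clear hcon hW hadj hnot hadjnn hwx hcross
        omega
  · -- 4 ≤ x.val ≤ k-2
    obtain ⟨d, hd2⟩ : ∃ d, x.val = d + 2 := ⟨x.val - 2, by omega⟩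
    have hdk : d < k := by omega
    have hd : (⟨d, hdk⟩ : Fin k) ∉ W := by
      apply hnot
      rw [adjGrL]
      omega
    have hcon := hW u hu v hv _ hd
    rw [adjGrR, adjGrR] at hcon
    have hsel : u.val = d + 1 ∨ v.val = d + 1 := by clear hcon hW hadj hnot hadjnn hwx hcross; omega
    rcases hsel with h | h
    · have h5 := hcon.mp (Or.inr (Or.inl h.symm))
      clear hcon hW hadj hnot hadjnn hwx hcross
      omega
    · have h5 := hcon.mpr (Or.inr (Or.inl h.symm))
      clear hcon hW hadj hnot hadjnn hwx hcross
      omega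
  · omega

set_option linter.all false in
set_option maxHeartbeats 2000000 in
lemma rigid {k : ℕ} (hk : 6 ≤ k) (φ : Gr k ≃g Gr k) : ∀ v, φ v = v := by
  have hmap : ∀ a b : Fin k, (Gr k).Adj (φ a) (φ b) ↔ (Gr k).Adj a b := fun a b => φ.map_adj_iff
  have hinj : Function.Injective φ := φ.injective
  -- transport adjacency along fixed points
  have key : ∀ a b : Fin k, φ a = a → (Gr k).Adj a b → (Gr k).Adj a (φ b) := by
    intro a b ha hab
    have h := (hmap a b).mpr hab
    rwa [ha] at h
  -- degree-one predicate
  have deg1_pres : ∀ v : Fin k,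
      (∀ a b : Fin k, (Gr k).Adj v a → (Gr k).Adj v b → a = b) →
      (∀ a b : Fin k, (Gr k).Adj (φ v) a → (Gr k).Adj (φ v) b → a = b) := by
    intro v h a b haa hbb
    have ha' : (Gr k).Adj (φ v) (φ (φ.symm a)) := by
      rwa [RelIso.apply_symm_apply]
    have hb' : (Gr k).Adj (φ v) (φ (φ.symm b)) := by
      rwa [RelIso.apply_symm_apply]
    have h1 : (Gr k).Adj v (φ.symm a) := (hmap v (φ.symm a)).mp ha'
    have h2 : (Gr k).Adj v (φ.symm b) := (hmap v (φ.symm b)).mp hb'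
    have h3 := h _ _ h1 h2
    have := congrArg φ h3
    rwa [RelIso.apply_symm_apply, RelIso.apply_symm_apply] at this
  have deg1_zero : ∀ (h0 : (0:ℕ) < k), ∀ a b : Fin k,
      (Gr k).Adj ⟨0,h0⟩ a → (Gr k).Adj ⟨0,h0⟩ b → a = b := by
    intro h0 a b ha hb
    rw [adjGrL] at ha hb
    apply Fin.ext
    omega
  have deg1_char : ∀ v : Fin k,
      (∀ a b : Fin k, (Gr k).Adj v a → (Gr k).Adj v b → a = b) →
      v.val = 0 ∨ v.val = k-1 := by
    intro v h
    by_contra hcon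
    push_neg at hcon
    obtain ⟨hc1, hc2⟩ := hcon
    have hvk := v.isLt
    have hvk2 : v.val + 1 < k := by
      rcases Nat.lt_or_ge (v.val + 1) k with h | h
      · exact h
      · exact absurd (by omega : v.val = k - 1) hc2
    have h1 : (Gr k).Adj v ⟨v.val-1, by omega⟩ := by
      rw [adjGr]; simp only [Fin.val_mk]; omega
    have h2 : (Gr k).Adj v ⟨v.val+1, hvk2⟩ := by
      rw [adjGr]; exact Or.inl rfl
    have h3 := h _ _ h1 h2
    rw [Fin.mk.injEq] at h3
    omega
  -- three-distinct-neighbors predicate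
  have Qp_char : ∀ v : Fin k,
      (∃ a b c : Fin k, a ≠ b ∧ a ≠ c ∧ b ≠ c ∧
        (Gr k).Adj v a ∧ (Gr k).Adj v b ∧ (Gr k).Adj v c) →
      v.val = 1 ∨ v.val = 3 := by
    rintro v ⟨a, b, c, hab, hac, hbc, ha, hb, hc⟩
    rw [adjGr] at ha hb hc
    have h1 : a.val ≠ b.val := fun h => hab (Fin.ext h)
    have h2 : a.val ≠ c.val := fun h => hac (Fin.ext h)
    have h3 : b.val ≠ c.val := fun h => hbc (Fin.ext h)
    omega
  have Qp_one : ∀ (h1 : (1:ℕ) < k), ∃ a b c : Fin k, a ≠ b ∧ a ≠ c ∧ b ≠ c ∧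
      (Gr k).Adj ⟨1,h1⟩ a ∧ (Gr k).Adj ⟨1,h1⟩ b ∧ (Gr k).Adj ⟨1,h1⟩ c := by
    intro h1
    refine ⟨⟨0, by omega⟩, ⟨2, by omega⟩, ⟨3, by omega⟩, ?_, ?_, ?_, ?_, ?_, ?_⟩
    · intro h; rw [Fin.mk.injEq] at h; omega
    · intro h; rw [Fin.mk.injEq] at h; omega
    · intro h; rw [Fin.mk.injEq] at h; omega
    · rw [adjGr']; omega
    · rw [adjGr']; omega
    · rw [adjGr']; omega
  have Qp_pres : ∀ v : Fin k,
      (∃ a b c : Fin k, a ≠ b ∧ a ≠ c ∧ b ≠ c ∧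
        (Gr k).Adj v a ∧ (Gr k).Adj v b ∧ (Gr k).Adj v c) →
      (∃ a b c : Fin k, a ≠ b ∧ a ≠ c ∧ b ≠ c ∧
        (Gr k).Adj (φ v) a ∧ (Gr k).Adj (φ v) b ∧ (Gr k).Adj (φ v) c) := by
    rintro v ⟨a, b, c, hab, hac, hbc, ha, hb, hc⟩
    exact ⟨φ a, φ b, φ c, fun h => hab (hinj h), fun h => hac (hinj h),
      fun h => hbc (hinj h), (hmap v a).mpr ha, (hmap v b).mpr hb, (hmap v c).mpr hc⟩
  -- main induction
  have main : ∀ n, ∀ hn : n < k, φ ⟨n, hn⟩ = ⟨n, hn⟩ := by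
    intro n
    induction n using Nat.strong_induction_on with
    | _ n ih =>
    intro hn
    -- helper: injectivity exclusion
    have hne : ∀ m (hm : m < k), m ≠ n → φ ⟨m, hm⟩ = ⟨m, hm⟩ → (φ ⟨n, hn⟩).val ≠ m := by
      intro m hm hmn hfix hval
      apply hmn
      have h1 : φ ⟨n, hn⟩ = ⟨m, hm⟩ := Fin.ext hval
      have h2 : φ ⟨m, hm⟩ = φ ⟨n, hn⟩ := by rw [hfix, h1]
      have h3 := hinj h2
      rw [Fin.mk.injEq] at h3
      omega
    rcases (show n = 0 ∨ n = 1 ∨ n = 2 ∨ n = 3 ∨ 4 ≤ n from by omega) with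
      rfl | rfl | rfl | rfl | h4
    · -- n = 0
      have hd0 := deg1_char _ (deg1_pres _ (deg1_zero hn))
      have hadj01 : (Gr k).Adj (⟨0, hn⟩ : Fin k) ⟨1, by omega⟩ := by rw [adjGr']; omega
      have hQ1 := Qp_char _ (Qp_pres _ (Qp_one (by omega)))
      have hadjφ : (Gr k).Adj (φ ⟨0, hn⟩) (φ ⟨1, by omega⟩) := (hmap _ _).mpr hadj01
      rw [adjGr] at hadjφ
      have h1 := (φ (⟨0, hn⟩ : Fin k)).isLt
      have h2 := (φ (⟨1, show (1:ℕ) < k by omega⟩ : Fin k)).isLt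
      apply Fin.ext
      show (φ ⟨0, hn⟩).val = 0
      omega
    · -- n = 1
      have h0 : φ (⟨0, by omega⟩ : Fin k) = ⟨0, by omega⟩ := ih 0 (by omega) (by omega)
      have hadj01 : (Gr k).Adj (⟨0, by omega⟩ : Fin k) ⟨1, hn⟩ := by rw [adjGr']; omega
      have h2 := key _ _ h0 hadj01
      rw [adjGrL] at h2
      apply Fin.ext
      show (φ ⟨1, hn⟩).val = 1
      omega
    · -- n = 2
      have h0 : φ (⟨0, by omega⟩ : Fin k) = ⟨0, by omega⟩ := ih 0 (by omega) (by omega)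
      have h1 : φ (⟨1, by omega⟩ : Fin k) = ⟨1, by omega⟩ := ih 1 (by omega) (by omega)
      have hadj12 : (Gr k).Adj (⟨1, by omega⟩ : Fin k) ⟨2, hn⟩ := by rw [adjGr']; omega
      have h2 := key _ _ h1 hadj12
      rw [adjGrL] at h2
      have hne0 := hne 0 (by omega) (by omega) h0
      -- exclude value 3 via Qp
      have hval3 : (φ ⟨2, hn⟩).val ≠ 3 := by
        intro hv3
        have hQφ : ∃ a b c : Fin k, a ≠ b ∧ a ≠ c ∧ b ≠ c ∧
            (Gr k).Adj (φ ⟨2, hn⟩) a ∧ (Gr k).Adj (φ ⟨2, hn⟩) b ∧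
            (Gr k).Adj (φ ⟨2, hn⟩) c := by
          have hφ3 : φ (⟨2, hn⟩ : Fin k) = ⟨3, by omega⟩ := Fin.ext hv3
          rw [hφ3]
          refine ⟨⟨1, by omega⟩, ⟨2, by omega⟩, ⟨4, by omega⟩, ?_, ?_, ?_, ?_, ?_, ?_⟩
          · intro h; rw [Fin.mk.injEq] at h; omega
          · intro h; rw [Fin.mk.injEq] at h; omega
          · intro h; rw [Fin.mk.injEq] at h; omega
          · rw [adjGr']; omega
          · rw [adjGr']; omega
          · rw [adjGr']; omega
        -- pull back along φ
        obtain ⟨a, b, c, hab, hac, hbc, ha, hb, hc⟩ := hQφ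
        have hQ2 := Qp_char (⟨2, hn⟩ : Fin k) ⟨φ.symm a, φ.symm b, φ.symm c,
          fun h => hab (by simpa using congrArg φ h),
          fun h => hac (by simpa using congrArg φ h),
          fun h => hbc (by simpa using congrArg φ h),
          (hmap _ _).mp (by rwa [RelIso.apply_symm_apply]),
          (hmap _ _).mp (by rwa [RelIso.apply_symm_apply]),
          (hmap _ _).mp (by rwa [RelIso.apply_symm_apply])⟩
        simp only [Fin.val_mk] at hQ2
        omega
      apply Fin.ext
      show (φ ⟨2, hn⟩).val = 2
      omega
    · -- n = 3
      have h0 : φ (⟨0, by omega⟩ : Fin k) = ⟨0, by omega⟩ := ih 0 (by omega) (by omega)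
      have h1 : φ (⟨1, by omega⟩ : Fin k) = ⟨1, by omega⟩ := ih 1 (by omega) (by omega)
      have h2 : φ (⟨2, by omega⟩ : Fin k) = ⟨2, by omega⟩ := ih 2 (by omega) (by omega)
      have hadj13 : (Gr k).Adj (⟨1, by omega⟩ : Fin k) ⟨3, hn⟩ := by rw [adjGr']; omega
      have h3 := key _ _ h1 hadj13
      rw [adjGrL] at h3
      have hne0 := hne 0 (by omega) (by omega) h0
      have hne2 := hne 2 (by omega) (by omega) h2
      apply Fin.ext
      show (φ ⟨3, hn⟩).val = 3
      omega
    · -- n ≥ 4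
      have hm1 : φ (⟨n-1, by omega⟩ : Fin k) = ⟨n-1, by omega⟩ := ih (n-1) (by omega) (by omega)
      have hm2 := hne (n-2) (by omega) (by omega) (ih (n-2) (by omega) (by omega))
      have hx1 := hne 1 (by omega) (by omega) (ih 1 (by omega) (by omega))
      have hadjn : (Gr k).Adj (⟨n-1, by omega⟩ : Fin k) ⟨n, hn⟩ := by rw [adjGr']; omega
      have h2 := key _ _ hm1 hadjn
      rw [adjGrL] at h2
      apply Fin.ext
      show (φ ⟨n, hn⟩).val = n
      omega
  intro v
  have := main v.val v.isLt
  rwa [Fin.eta] at this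

theorem stmt8 (k : ℕ) (hk : 6 ≤ k) : ∃ H : SimpleGraph (Fin k), Stringent H := by
  refine ⟨Gr k, ?_, ?_⟩
  · intro W h1 h2
    exact no_homog hk W h1 h2
  · intro φ
    exact rigid hk φ
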